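/- arXiv:2407.21701 — 3 statements merged into one kernel-verified Lean document; each statement's English description precedes it below -/
import Mathlib

section
/- Let m ∈ ℤ₊ᵏ with gcd(m) = 1. Then there do not exist distinct vectors a, b ∈ ℤ₊ᵏ with a ≺ m and b ≺ m (strict componentwise domination, a ⪯ m with strict inequality in at least one coordinate) such that (m − 2a) + (m − 2b) = α·m or (m − 2a) − (m − 2b) = α·m for some nonzero integer α. -/
/-- no nontrivial integer-multiple relation `(m−2a) ± (m−2b) = α·m`
with distinct `a, b ≺ m`, when gcd(m) = 1. -/
theorem no_nontrivial_multiple_of_gcd_one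
    {k : ℕ} (m : Fin k → ℤ) (hmpos : ∀ j, 0 ≤ m j)
    (hgcd : Finset.univ.gcd m = 1) :
    ¬ ∃ a b : Fin k → ℤ, (∀ j, 0 ≤ a j) ∧ (∀ j, 0 ≤ b j) ∧ a ≠ b ∧
      ((∀ j, a j ≤ m j) ∧ a ≠ m) ∧ ((∀ j, b j ≤ m j) ∧ b ≠ m) ∧
      ∃ α : ℤ, α ≠ 0 ∧
        ((∀ j, (m j - 2 * a j) + (m j - 2 * b j) = α * m j) ∨
         (∀ j, (m j - 2 * a j) - (m j - 2 * b j) = α * m j)) := by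
  rintro ⟨a, b, ha, hb, hab, ⟨ham, hane⟩, ⟨hbm, hbne⟩, α, hα, hrel⟩
  obtain ⟨j0, n, hn⟩ : ∃ j, ∃ n : ℤ, m j = 2 * n + 1 := by
    by_contra h
    push_neg at h
    have h2 : (2:ℤ) ∣ Finset.univ.gcd m := by
      refine Finset.dvd_gcd fun i _ => ?_
      rcases Int.even_or_odd (m i) with ⟨r, hr⟩ | ⟨r, hr⟩
      · exact ⟨r, by omega⟩
      · exact absurd hr (by have := h i r; omega)
    rw [hgcd] at h2
    norm_num at h2
  have hm1 : 1 ≤ m j0 := by have := hmpos j0; omega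
  have heven : ∃ t : ℤ, α = 2 * t := by
    have hev : Even (α * m j0) := by
      rcases hrel with h | h
      · exact ⟨m j0 - a j0 - b j0, by have := h j0; ring_nf; ring_nf at this; linarith⟩
      · exact ⟨b j0 - a j0, by have := h j0; ring_nf; ring_nf at this; linarith⟩
    rcases Int.even_mul.mp hev with ⟨t, ht⟩ | ⟨t, ht⟩
    · exact ⟨t, by omega⟩
    · exact absurd ht (by omega)
  obtain ⟨t, ht⟩ := heven
  subst ht
  have ht0 : t ≠ 0 := by omega
  rcases hrel with h | h
  · by_cases h1 : t = 1
    · subst h1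
      exact hab (funext fun j => by have := h j; have := ha j; have := hb j; omega)
    · by_cases h2 : t = -1
      · subst h2
        exact hane (funext fun j => by
          have := h j; have := ham j; have := hbm j; omega)
      · rcases (by omega : 2 ≤ t ∨ t ≤ -2) with ht2 | ht2
        · have hmul : 2 * m j0 ≤ t * m j0 :=
            mul_le_mul_of_nonneg_right ht2 (hmpos j0)
          have := h j0
          nlinarith [ha j0, hb j0]
        · have hmul : t * m j0 ≤ -2 * m j0 :=
            mul_le_mul_of_nonneg_right ht2 (hmpos j0)
          have := h j0
          nlinarith [ham j0, hbm j0]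
  · by_cases h1 : t = 1
    · subst h1
      exact hbne (funext fun j => by
        have := h j; have := hbm j; have := ha j; omega)
    · by_cases h2 : t = -1
      · subst h2
        exact hane (funext fun j => by
          have := h j; have := ham j; have := hb j; omega)
      · rcases (by omega : 2 ≤ t ∨ t ≤ -2) with ht2 | ht2
        · have hmul : 2 * m j0 ≤ t * m j0 :=
            mul_le_mul_of_nonneg_right ht2 (hmpos j0)
          have := h j0
          nlinarith [ha j0, hbm j0]
        · have hmul : t * m j0 ≤ -2 * m j0 :=
            mul_le_mul_of_nonneg_right ht2 (hmpos j0)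
          have := h j0
          nlinarith [ham j0, hb j0]
end

section
/- Let Λ = diag(λ₁,…,λₙ) with all λᵢ ≥ 0 and Σλᵢ = 1, and let v ∈ ℝⁿ satisfy λᵢ ≥ |vᵢ| for all i. Then the symmetric matrix A = Λ − v vᵀ is positive semidefinite. -/
open Matrix

/-- `diag(λ) − v vᵀ` is positive semidefinite when `λᵢ ≥ |vᵢ|`,
`λᵢ ≥ 0` and `Σ λᵢ = 1`. -/
theorem diagonal_sub_outer_posSemidef
    {n : ℕ} (l v : Fin n → ℝ)
    (hl : ∀ i, 0 ≤ l i) (hsum : ∑ i, l i = 1)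
    (hlv : ∀ i, |v i| ≤ l i) :
    (Matrix.diagonal l - Matrix.vecMulVec v v).PosSemidef := by
  rw [Matrix.posSemidef_iff_dotProduct_mulVec]
  constructor
  · refine (Matrix.isHermitian_diagonal l).sub ?_
    ext i j
    simp [Matrix.conjTranspose, Matrix.vecMulVec_apply, mul_comm]
  · intro x
    have h1 : x ⬝ᵥ (Matrix.diagonal l *ᵥ x) = ∑ i, l i * x i ^ 2 := by
      simp only [dotProduct, Matrix.mulVec_diagonal]
      apply Finset.sum_congr rfl; intros; ring
    have h2 : x ⬝ᵥ (Matrix.vecMulVec v v *ᵥ x) = (∑ i, v i * x i) ^ 2 := by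
      simp only [dotProduct, Matrix.mulVec, Matrix.vecMulVec_apply, sq,
        Finset.sum_mul, Finset.mul_sum]
      apply Finset.sum_congr rfl; intros; apply Finset.sum_congr rfl; intros; ring
    have hmain : (∑ i, v i * x i) ^ 2 ≤ ∑ i, l i * x i ^ 2 := by
      have key : (∑ i, Real.sqrt (l i) * (Real.sqrt (l i) * |x i|)) ^ 2
          ≤ (∑ i, Real.sqrt (l i) ^ 2) * ∑ i, (Real.sqrt (l i) * |x i|) ^ 2 :=
        Finset.sum_mul_sq_le_sq_mul_sq Finset.univ _ _
      have e1 : ∑ i, Real.sqrt (l i) ^ 2 = 1 := by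
        simp_rw [Real.sq_sqrt (hl _)]; exact hsum
      have e2 : ∑ i, (Real.sqrt (l i) * |x i|) ^ 2 = ∑ i, l i * x i ^ 2 := by
        apply Finset.sum_congr rfl; intro i _
        rw [mul_pow, Real.sq_sqrt (hl i), sq_abs]
      rw [e1, e2, one_mul] at key
      refine le_trans ?_ key
      rw [← sq_abs (∑ i, v i * x i)]
      apply pow_le_pow_left₀ (abs_nonneg _)
      refine (Finset.abs_sum_le_sum_abs _ _).trans ?_
      apply Finset.sum_le_sum; intro i _
      rw [abs_mul, ← mul_assoc, Real.mul_self_sqrt (hl i)]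
      exact mul_le_mul_of_nonneg_right (hlv i) (abs_nonneg _)
    simp only [RCLike.re_to_real, star_trivial, Matrix.sub_mulVec, dotProduct_sub, h1, h2]
    linarith
end

section
/- Let A = Λ − v vᵀ with Λ = diag(λ) diagonal, λᵢ ≥ 0, Σλᵢ = 1, v ∈ ℝⁿ, and λᵢ ≥ |vᵢ| for all i. Then rank Λ ≥ rank A ≥ rank Λ − 1, and rank A = rank Λ − 1 if and only if λᵢ = |vᵢ| for every i. -/
open Matrix

set_option maxHeartbeats 1000000
set_option synthInstance.maxHeartbeats 400000

/-- Auxiliary: equality case of the Cauchy-Schwarz argument. -/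
lemma aux_cs_eq {n : ℕ} (l v : Fin n → ℝ)
    (hl : ∀ i, 0 ≤ l i) (hsum : ∑ i, l i = 1)
    (hlv : ∀ i, |v i| ≤ l i) (x : Fin n → ℝ)
    (hq : ∑ i, l i * x i ^ 2 = (∑ i, v i * x i) ^ 2)
    (hnz : ∃ i, l i * x i ≠ 0) : ∀ i, l i = |v i| := by
  set S := ∑ i, l i * x i ^ 2 with hS
  set T := ∑ i, |v i| * x i ^ 2 with hT
  set c := ∑ i, |v i| with hc
  have hc1 : c ≤ 1 := hsum ▸ Finset.sum_le_sum (fun i _ => hlv i)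
  have hc0 : 0 ≤ c := Finset.sum_nonneg (fun i _ => abs_nonneg _)
  have hTS : T ≤ S := Finset.sum_le_sum (fun i _ => by
    have := hlv i; nlinarith [sq_nonneg (x i)])
  have hCS : (∑ i, v i * x i) ^ 2 ≤ c * T := by
    refine Finset.sum_sq_le_sum_mul_sum_of_sq_eq_mul _ (fun i _ => abs_nonneg _)
      (fun i _ => mul_nonneg (abs_nonneg _) (sq_nonneg _)) (fun i _ => ?_)
    rw [mul_pow, ← sq_abs (v i)]
    ring
  have hSpos : 0 < S := by
    obtain ⟨i, hi⟩ := hnz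
    have hli : 0 < l i := lt_of_le_of_ne (hl i) (by
      intro h; exact hi (by rw [← h, zero_mul]))
    have hxi : x i ≠ 0 := fun h => hi (by rw [h, mul_zero])
    have : 0 < l i * x i ^ 2 := mul_pos hli (by positivity)
    refine Finset.sum_pos' (fun j _ => mul_nonneg (hl j) (sq_nonneg _)) ⟨i, Finset.mem_univ i, this⟩
  have hSc : S ≤ c * S := le_trans (hq ▸ hCS) (by nlinarith)
  have hc1' : 1 ≤ c := by nlinarith
  have hceq : c = 1 := le_antisymm hc1 hc1'
  have hzero : ∑ i, (l i - |v i|) = 0 := by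
    rw [Finset.sum_sub_distrib, hsum, ← hc, hceq, sub_self]
  intro i
  have := (Finset.sum_eq_zero_iff_of_nonneg (fun j _ => sub_nonneg.mpr (hlv j))).mp hzero i
    (Finset.mem_univ i)
  linarith [this]

/-- rank bounds for `A = Λ − v vᵀ`:
`rank Λ ≥ rank A ≥ rank Λ − 1`, with equality in the lower bound iff
`λᵢ = |vᵢ|` for every `i`. -/
theorem rank_diagonal_sub_outer
    {n : ℕ} (l v : Fin n → ℝ)
    (hl : ∀ i, 0 ≤ l i) (hsum : ∑ i, l i = 1)
    (hlv : ∀ i, |v i| ≤ l i)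
    (A : Matrix (Fin n) (Fin n) ℝ)
    (hA : A = Matrix.diagonal l - Matrix.vecMulVec v v) :
    A.rank ≤ (Matrix.diagonal l).rank ∧
      (Matrix.diagonal l).rank - 1 ≤ A.rank ∧
      (A.rank = (Matrix.diagonal l).rank - 1 ↔ ∀ i, l i = |v i|) := by
  classical
  set D := Matrix.diagonal l with hD
  -- basic mulVec computations
  have hDx : ∀ x : Fin n → ℝ, D *ᵥ x = fun i => l i * x i := by
    intro x; funext i; simp [hD, mulVec_diagonal]
  have hAx : ∀ x : Fin n → ℝ, A *ᵥ x = fun i => l i * x i - v i * (∑ j, v j * x j) := by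
    intro x; funext i
    rw [hA, sub_mulVec]
    simp only [Pi.sub_apply]
    congr 1
    · simp [hD, mulVec_diagonal]
    · simp [mulVec, dotProduct, vecMulVec_apply, Finset.mul_sum, mul_assoc]
  -- kernels
  set KA := LinearMap.ker A.mulVecLin with hKA
  set KD := LinearMap.ker D.mulVecLin with hKD
  have memKA : ∀ x, x ∈ KA ↔ ∀ i, l i * x i - v i * (∑ j, v j * x j) = 0 := by
    intro x
    rw [hKA, LinearMap.mem_ker, Matrix.mulVecLin_apply, hAx, funext_iff]
    simp
  have memKD : ∀ x, x ∈ KD ↔ ∀ i, l i * x i = 0 := by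
    intro x
    rw [hKD, LinearMap.mem_ker, Matrix.mulVecLin_apply, hDx, funext_iff]
    simp
  -- KD ≤ KA
  have hsub : KD ≤ KA := by
    intro x hx
    rw [memKD] at hx
    rw [memKA]
    intro i
    have hvx : ∀ j, v j * x j = 0 := by
      intro j
      rcases mul_eq_zero.mp (hx j) with h | h
      · have : v j = 0 := abs_nonpos_iff.mp (h ▸ hlv j)
        rw [this, zero_mul]
      · rw [h, mul_zero]
    rw [hx i, Finset.sum_eq_zero (fun j _ => hvx j), mul_zero, sub_zero]
  -- rank-nullity
  have hrnA : A.rank + Module.finrank ℝ KA = n := by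
    have := LinearMap.finrank_range_add_finrank_ker A.mulVecLin
    rwa [Module.finrank_fin_fun] at this
  have hrnD : D.rank + Module.finrank ℝ KD = n := by
    have := LinearMap.finrank_range_add_finrank_ker D.mulVecLin
    rwa [Module.finrank_fin_fun] at this
  have hmono : Module.finrank ℝ KD ≤ Module.finrank ℝ KA := Submodule.finrank_mono hsub
  -- finrank KA ≤ finrank KD + 1 via the functional x ↦ v ⬝ᵥ x on KA
  have hdim : Module.finrank ℝ KA ≤ Module.finrank ℝ KD + 1 := by
    let f : (Fin n → ℝ) →ₗ[ℝ] ℝ :=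
      { toFun := fun x => ∑ j, v j * x j
        map_add' := by intro a b; simp [mul_add, Finset.sum_add_distrib]
        map_smul' := by
          intro c a
          simp only [RingHom.id_apply, Pi.smul_apply, smul_eq_mul, Finset.mul_sum]
          exact Finset.sum_congr rfl (fun j _ => by ring)
      }
    let φ : KA →ₗ[ℝ] ℝ := f.comp KA.subtype
    have h1 : Module.finrank ℝ KA =
        Module.finrank ℝ (LinearMap.range φ) + Module.finrank ℝ (LinearMap.ker φ) :=
      (LinearMap.finrank_range_add_finrank_ker φ).symm
    have h2 : Module.finrank ℝ (LinearMap.range φ) ≤ 1 := by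
      have := Submodule.finrank_le (LinearMap.range φ)
      simpa using this
    have h3 : LinearMap.ker φ ≤ Submodule.comap KA.subtype KD := by
      rintro ⟨x, hx⟩ hker
      simp only [LinearMap.mem_ker, LinearMap.comp_apply, Submodule.subtype_apply] at hker
      have hker' : ∑ j, v j * x j = 0 := hker
      simp only [Submodule.mem_comap, Submodule.subtype_apply]
      rw [memKD]
      intro i
      have := (memKA x).mp hx i
      rw [hker', mul_zero, sub_zero] at this
      exact this
    have h4 : Module.finrank ℝ (Submodule.comap KA.subtype KD) = Module.finrank ℝ KD :=
      (Submodule.comapSubtypeEquivOfLe hsub).finrank_eq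
    have h5 : Module.finrank ℝ (LinearMap.ker φ) ≤ Module.finrank ℝ KD :=
      h4 ▸ Submodule.finrank_mono h3
    omega
  -- rank D ≥ 1
  have hDrank : 1 ≤ D.rank := by
    have hex : ∃ i, l i ≠ 0 := by
      by_contra h
      push_neg at h
      rw [Finset.sum_eq_zero (fun i _ => h i)] at hsum
      norm_num at hsum
    obtain ⟨i, hi⟩ := hex
    by_contra h
    push_neg at h
    interval_cases hr : D.rank
    · -- rank 0 means finrank KD = n, so KD = ⊤, so e_i ∈ KD
      have hKDn : Module.finrank ℝ KD = n := by omega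
      have htop : KD = ⊤ := by
        apply Submodule.eq_top_of_finrank_eq
        rw [hKDn, Module.finrank_fin_fun]
      have : (Pi.single i 1 : Fin n → ℝ) ∈ KD := htop ▸ Submodule.mem_top
      rw [memKD] at this
      have := this i
      simp at this
      exact hi this
  refine ⟨by omega, by omega, ?_⟩
  constructor
  · -- forward: rank drop ⇒ l = |v|
    intro heq
    have hlt : Module.finrank ℝ KD < Module.finrank ℝ KA := by omega
    have hex : ∃ x, x ∈ KA ∧ x ∉ KD := by
      by_contra h
      push_neg at h
      have : KA ≤ KD := fun x hx => h x hx
      have := Submodule.finrank_mono this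
      omega
    obtain ⟨x, hxA, hxD⟩ := hex
    have hxA' := (memKA x).mp hxA
    have hnz : ∃ i, l i * x i ≠ 0 := by
      by_contra h
      push_neg at h
      exact hxD ((memKD x).mpr h)
    -- quadratic identity
    have hq : ∑ i, l i * x i ^ 2 = (∑ j, v j * x j) ^ 2 := by
      have : ∀ i, l i * x i ^ 2 = v i * x i * (∑ j, v j * x j) := by
        intro i
        have := hxA' i
        have hli : l i * x i = v i * (∑ j, v j * x j) := by linarith
        rw [sq, ← mul_assoc, hli]; ring
      rw [Finset.sum_congr rfl (fun i _ => this i), ← Finset.sum_mul, sq]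
    exact aux_cs_eq l v hl hsum hlv x hq hnz
  · -- backward: l = |v| ⇒ rank drop
    intro h
    set u : Fin n → ℝ := fun i => if v i < 0 then (-1 : ℝ) else 1 with hu
    have hlu : ∀ i, l i * u i = v i := by
      intro i
      rw [h i, hu]
      by_cases hv : v i < 0
      · simp [hv, abs_of_neg hv]
      · simp [hv, abs_of_nonneg (not_lt.mp hv)]
    have hvu : ∀ i, v i * u i = l i := by
      intro i
      rw [h i, hu]
      by_cases hv : v i < 0
      · simp [hv, abs_of_neg hv]
      · simp [hv, abs_of_nonneg (not_lt.mp hv)]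
    have huA : u ∈ KA := by
      rw [memKA]
      intro i
      rw [Finset.sum_congr rfl (fun j _ => hvu j), hsum, mul_one, hlu i, sub_self]
    have huD : u ∉ KD := by
      have hex : ∃ i, l i ≠ 0 := by
        by_contra hc
        push_neg at hc
        rw [Finset.sum_eq_zero (fun i _ => hc i)] at hsum
        norm_num at hsum
      obtain ⟨i, hi⟩ := hex
      intro hmem
      rw [memKD] at hmem
      have h1 := hmem i
      have h2 : u i ≠ 0 := by
        rw [hu]; by_cases hv : v i < 0 <;> simp [hv]
      exact hi (by rcases mul_eq_zero.mp h1 with h | h; exact h; exact absurd h h2)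
    have hlt : KD < KA := SetLike.lt_iff_le_and_exists.mpr ⟨hsub, u, huA, huD⟩
    have : Module.finrank ℝ KD < Module.finrank ℝ KA :=
      Submodule.finrank_lt_finrank_of_lt hlt
    omega
end
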